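/- Scott's parallel OR is not definable in the simply typed λ-calculus with booleans: there is no simply typed λ-term O : Bool → Bool → Bool such that, under the standard reduction semantics, O F F reduces to F while O u T reduces to T and O T u reduces to T for every term u (including free variables u). -/

import Mathlib

/-- Types: the base type of booleans and function types. -/
inductive Ty : Type
  | bool : Ty
  | arrow : Ty → Ty → Ty

/-- Terms of the simply typed λ-calculus with booleans (de Bruijn indices),
with constants `T`, `F` and an if-then-else construct. -/
inductive Tm : Type
  | var : ℕ → Tm
  | lam : Ty → Tm → Tm
  | app : Tm → Tm → Tm
  | tt : Tm
  | ff : Tm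
  | ite : Tm → Tm → Tm → Tm

/-- Shift free de Bruijn variables `≥ c` up by one. -/
def shift (c : ℕ) : Tm → Tm
  | .var n => if n < c then .var n else .var (n + 1)
  | .lam A t => .lam A (shift (c + 1) t)
  | .app t u => .app (shift c t) (shift c u)
  | .tt => .tt
  | .ff => .ff
  | .ite t u v => .ite (shift c t) (shift c u) (shift c v)

/-- Substitution of `s` for variable `k`. -/
def subst (k : ℕ) (s : Tm) : Tm → Tm
  | .var n => if n < k then .var n else if n = k then s else .var (n - 1)
  | .lam A t => .lam A (subst (k + 1) (shift 0 s) t)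
  | .app t u => .app (subst k s t) (subst k s u)
  | .tt => .tt
  | .ff => .ff
  | .ite t u v => .ite (subst k s t) (subst k s u) (subst k s v)

/-- Typing judgment. -/
inductive HasTy : List Ty → Tm → Ty → Prop
  | var {Γ n A} : Γ[n]? = some A → HasTy Γ (.var n) A
  | lam {Γ A B t} : HasTy (A :: Γ) t B → HasTy Γ (.lam A t) (Ty.arrow A B)
  | app {Γ A B t u} : HasTy Γ t (Ty.arrow A B) → HasTy Γ u A → HasTy Γ (.app t u) B
  | tt {Γ} : HasTy Γ .tt .bool
  | ff {Γ} : HasTy Γ .ff .bool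
  | ite {Γ A c t u} : HasTy Γ c .bool → HasTy Γ t A → HasTy Γ u A →
      HasTy Γ (.ite c t u) A

/-- Standard reduction: β-reduction and the if-then-else rules, applied anywhere. -/
inductive Step : Tm → Tm → Prop
  | beta {A t u} : Step (.app (.lam A t) u) (subst 0 u t)
  | iteT {t u} : Step (.ite .tt t u) t
  | iteF {t u} : Step (.ite .ff t u) u
  | congLam {A t t'} : Step t t' → Step (.lam A t) (.lam A t')
  | congAppL {t t' u} : Step t t' → Step (.app t u) (.app t' u)
  | congAppR {t u u'} : Step u u' → Step (.app t u) (.app t u')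
  | congIte₀ {t t' u v} : Step t t' → Step (.ite t u v) (.ite t' u v)
  | congIte₁ {t u u' v} : Step u u' → Step (.ite t u v) (.ite t u' v)
  | congIte₂ {t u v v'} : Step v v' → Step (.ite t u v) (.ite t u v')

theorem shift_shift (t : Tm) : ∀ c c', c' ≤ c →
    shift (c+1) (shift c' t) = shift c' (shift c t) := by
  induction t with
  | var n =>
    intro c c' h
    simp only [shift]
    split_ifs <;> simp only [shift] <;> split_ifs <;> first | rfl | omega
  | lam A t ih => intro c c' h; simp [shift, ih (c+1) (c'+1) (by omega)]
  | app t u iht ihu => intro c c' h; simp [shift, iht _ _ h, ihu _ _ h]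
  | tt => intros; rfl
  | ff => intros; rfl
  | ite t u v iht ihu ihv => intro c c' h; simp [shift, iht _ _ h, ihu _ _ h, ihv _ _ h]

theorem subst_shift_cancel (t : Tm) : ∀ k s, subst k s (shift k t) = t := by
  induction t with
  | var n =>
    intro k s
    simp only [shift]
    split_ifs <;> (try simp only [subst]) <;> (try split_ifs) <;>
      first | rfl | omega | (congr 1; omega)
  | lam A t ih => intro k s; simp [shift, subst, ih]
  | app t u iht ihu => intro k s; simp [shift, subst, iht, ihu]
  | tt => intros; rfl
  | ff => intros; rfl
  | ite t u v iht ihu ihv => intro k s; simp [shift, subst, iht, ihu, ihv]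

theorem shift_subst_high (t : Tm) : ∀ u k c, k ≤ c →
    shift c (subst k u t) = subst k (shift c u) (shift (c+1) t) := by
  induction t with
  | var n =>
    intro u k c h
    simp only [shift, subst]
    split_ifs <;> (try simp only [shift, subst]) <;> (try split_ifs) <;>
      first | rfl | omega | (congr 1; omega)
  | lam A t ih =>
    intro u k c h
    simp only [shift, subst, Tm.lam.injEq, true_and]
    rw [ih _ _ _ (by omega), shift_shift]
    omega
  | app t u iht ihu => intro u k c h; simp [shift, subst, iht _ _ _ h, ihu _ _ _ h]
  | tt => intros; rfl
  | ff => intros; rfl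
  | ite t u v iht ihu ihv =>
    intro u k c h; simp [shift, subst, iht _ _ _ h, ihu _ _ _ h, ihv _ _ _ h]

theorem shift_subst_low (t : Tm) : ∀ u k c, c ≤ k →
    shift c (subst k u t) = subst (k+1) (shift c u) (shift c t) := by
  induction t with
  | var n =>
    intro u k c h
    simp only [shift, subst]
    split_ifs <;> (try simp only [shift, subst]) <;> (try split_ifs) <;>
      first | rfl | omega | (congr 1; omega)
  | lam A t ih =>
    intro u k c h
    simp only [shift, subst, Tm.lam.injEq, true_and]
    rw [ih _ _ _ (by omega), shift_shift]
    omega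
  | app t u iht ihu => intro u k c h; simp [shift, subst, iht _ _ _ h, ihu _ _ _ h]
  | tt => intros; rfl
  | ff => intros; rfl
  | ite t u v iht ihu ihv =>
    intro u k c h; simp [shift, subst, iht _ _ _ h, ihu _ _ _ h, ihv _ _ _ h]

theorem subst_subst (t : Tm) : ∀ u s i k, i ≤ k →
    subst k s (subst i u t) = subst i (subst k s u) (subst (k+1) (shift i s) t) := by
  induction t with
  | var n =>
    intro u s i k h
    simp only [subst]
    split_ifs <;> (try simp only [subst]) <;> (try split_ifs) <;>
      first | rfl | omega | (congr 1; omega) | rw [subst_shift_cancel]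
  | lam A t ih =>
    intro u s i k h
    simp only [subst, Tm.lam.injEq, true_and]
    rw [ih _ _ _ _ (by omega), shift_subst_low _ _ _ _ (by omega), shift_shift _ _ _ (by omega)]
  | app t u iht ihu => intro u s i k h; simp [subst, iht _ _ _ _ h, ihu _ _ _ _ h]
  | tt => intros; rfl
  | ff => intros; rfl
  | ite t u v iht ihu ihv =>
    intro u s i k h; simp [subst, iht _ _ _ _ h, ihu _ _ _ _ h, ihv _ _ _ _ h]

abbrev Red := Relation.ReflTransGen Step

/-- Parallel reduction. -/
inductive Par : Tm → Tm → Prop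
  | var {n} : Par (.var n) (.var n)
  | tt : Par .tt .tt
  | ff : Par .ff .ff
  | lam {A t t'} : Par t t' → Par (.lam A t) (.lam A t')
  | app {t t' u u'} : Par t t' → Par u u' → Par (.app t u) (.app t' u')
  | ite {c c' u u' v v'} : Par c c' → Par u u' → Par v v' →
      Par (.ite c u v) (.ite c' u' v')
  | beta {A t t' u u'} : Par t t' → Par u u' →
      Par (.app (.lam A t) u) (subst 0 u' t')
  | iteT {u u' v} : Par u u' → Par (.ite .tt u v) u'
  | iteF {v v' u} : Par v v' → Par (.ite .ff u v) v'

theorem par_refl (t : Tm) : Par t t := by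
  induction t with
  | var n => exact .var
  | lam A t ih => exact .lam ih
  | app t u iht ihu => exact .app iht ihu
  | tt => exact .tt
  | ff => exact .ff
  | ite c u v ihc ihu ihv => exact .ite ihc ihu ihv

theorem step_par {t u : Tm} (h : Step t u) : Par t u := by
  induction h with
  | beta => exact .beta (par_refl _) (par_refl _)
  | iteT => exact .iteT (par_refl _)
  | iteF => exact .iteF (par_refl _)
  | congLam _ ih => exact .lam ih
  | congAppL _ ih => exact .app ih (par_refl _)
  | congAppR _ ih => exact .app (par_refl _) ih
  | congIte₀ _ ih => exact .ite ih (par_refl _) (par_refl _)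
  | congIte₁ _ ih => exact .ite (par_refl _) ih (par_refl _)
  | congIte₂ _ ih => exact .ite (par_refl _) (par_refl _) ih

/- Congruence of multi-step reduction. -/
theorem red_lam {A} {t t'} (h : Red t t') : Red (.lam A t) (.lam A t') :=
  Relation.ReflTransGen.lift (fun x => Tm.lam A x) (fun _ _ h => Step.congLam h) _ _ h
theorem red_appL {t t' u} (h : Red t t') : Red (.app t u) (.app t' u) :=
  Relation.ReflTransGen.lift (fun x => Tm.app x u) (fun _ _ h => Step.congAppL h) _ _ h
theorem red_appR {t u u'} (h : Red u u') : Red (.app t u) (.app t u') :=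
  Relation.ReflTransGen.lift (fun x => Tm.app t x) (fun _ _ h => Step.congAppR h) _ _ h
theorem red_ite₀ {t t' u v} (h : Red t t') : Red (.ite t u v) (.ite t' u v) :=
  Relation.ReflTransGen.lift (fun x => Tm.ite x u v) (fun _ _ h => Step.congIte₀ h) _ _ h
theorem red_ite₁ {t u u' v} (h : Red u u') : Red (.ite t u v) (.ite t u' v) :=
  Relation.ReflTransGen.lift (fun x => Tm.ite t x v) (fun _ _ h => Step.congIte₁ h) _ _ h
theorem red_ite₂ {t u v v'} (h : Red v v') : Red (.ite t u v) (.ite t u v') :=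
  Relation.ReflTransGen.lift (fun x => Tm.ite t u x) (fun _ _ h => Step.congIte₂ h) _ _ h

theorem par_red {t u : Tm} (h : Par t u) : Red t u := by
  induction h with
  | var => exact .refl
  | tt => exact .refl
  | ff => exact .refl
  | lam _ ih => exact red_lam ih
  | app _ _ iht ihu => exact .trans (red_appL iht) (red_appR ihu)
  | ite _ _ _ ihc ihu ihv =>
      exact .trans (red_ite₀ ihc) (.trans (red_ite₁ ihu) (red_ite₂ ihv))
  | beta _ _ iht ihu =>
      exact .trans (red_appL (red_lam iht)) (.trans (red_appR ihu) (.single .beta))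
  | iteT _ ih => exact .trans (.single .iteT) ih
  | iteF _ ih => exact .trans (.single .iteF) ih

theorem par_shift {t t' : Tm} (h : Par t t') : ∀ c, Par (shift c t) (shift c t') := by
  induction h with
  | var => intro c; exact par_refl _
  | tt => intro c; exact .tt
  | ff => intro c; exact .ff
  | lam _ ih => intro c; exact .lam (ih _)
  | app _ _ iht ihu => intro c; exact .app (iht _) (ihu _)
  | ite _ _ _ ihc ihu ihv => intro c; exact .ite (ihc _) (ihu _) (ihv _)
  | beta _ _ iht ihu =>
      intro c
      rw [shift_subst_high _ _ _ _ (Nat.zero_le c)]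
      exact .beta (iht _) (ihu _)
  | iteT _ ih => intro c; exact .iteT (ih _)
  | iteF _ ih => intro c; exact .iteF (ih _)

theorem par_subst {t t' : Tm} (h : Par t t') :
    ∀ k {s s' : Tm}, Par s s' → Par (subst k s t) (subst k s' t') := by
  induction h with
  | var =>
      intro k s s' hs
      simp only [subst]
      split_ifs <;> first | exact par_refl _ | exact hs
  | tt => intro k s s' hs; exact .tt
  | ff => intro k s s' hs; exact .ff
  | lam _ ih => intro k s s' hs; exact .lam (ih _ (par_shift hs 0))
  | app _ _ iht ihu => intro k s s' hs; exact .app (iht _ hs) (ihu _ hs)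
  | ite _ _ _ ihc ihu ihv => intro k s s' hs; exact .ite (ihc _ hs) (ihu _ hs) (ihv _ hs)
  | beta _ _ iht ihu =>
      intro k s s' hs
      simp only [subst]
      rw [subst_subst _ _ _ _ _ (Nat.zero_le k)]
      exact .beta (iht _ (par_shift hs 0)) (ihu _ hs)
  | iteT _ ih => intro k s s' hs; exact .iteT (ih _ hs)
  | iteF _ ih => intro k s s' hs; exact .iteF (ih _ hs)

/-- Complete development. -/
def dev : Tm → Tm
  | .var n => .var n
  | .tt => .tt
  | .ff => .ff
  | .lam A t => .lam A (dev t)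
  | .app t u =>
      match t with
      | .lam _ b => subst 0 (dev u) (dev b)
      | t => .app (dev t) (dev u)
  | .ite c u v =>
      match c with
      | .tt => dev u
      | .ff => dev v
      | c => .ite (dev c) (dev u) (dev v)

theorem par_lam_inv {A t w} (h : Par (.lam A t) w) :
    ∃ t', w = .lam A t' ∧ Par t t' := by
  cases h with
  | lam h => exact ⟨_, rfl, h⟩

theorem par_tt_inv {w} (h : Par .tt w) : w = .tt := by cases h; rfl
theorem par_ff_inv {w} (h : Par .ff w) : w = .ff := by cases h; rfl

theorem par_dev {t u : Tm} (h : Par t u) : Par u (dev t) := by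
  induction h with
  | var => exact .var
  | tt => exact .tt
  | ff => exact .ff
  | lam _ ih => exact .lam ih
  | app hpt hpu iht ihu =>
      cases hpt with
      | lam hb =>
          simp only [dev] at iht ⊢
          cases iht with
          | lam hb' => exact .beta hb' ihu
      | var => simp only [dev]; exact .app iht ihu
      | app h1 h2 => simp only [dev]; exact .app iht ihu
      | tt => simp only [dev]; exact .app iht ihu
      | ff => simp only [dev]; exact .app iht ihu
      | ite h1 h2 h3 => simp only [dev]; exact .app iht ihu
      | beta h1 h2 => simp only [dev]; exact .app iht ihu
      | iteT h1 => simp only [dev]; exact .app iht ihu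
      | iteF h1 => simp only [dev]; exact .app iht ihu
  | ite hpc hpu hpv ihc ihu ihv =>
      cases hpc with
      | tt => simp only [dev]; exact .iteT ihu
      | ff => simp only [dev]; exact .iteF ihv
      | var => simp only [dev]; exact .ite ihc ihu ihv
      | app h1 h2 => simp only [dev]; exact .ite ihc ihu ihv
      | lam h1 => simp only [dev]; exact .ite ihc ihu ihv
      | ite h1 h2 h3 => simp only [dev]; exact .ite ihc ihu ihv
      | beta h1 h2 => simp only [dev]; exact .ite ihc ihu ihv
      | iteT h1 => simp only [dev]; exact .ite ihc ihu ihv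
      | iteF h1 => simp only [dev]; exact .ite ihc ihu ihv
  | beta _ _ iht ihu =>
      simp only [dev]
      exact par_subst iht 0 ihu
  | iteT _ ih => exact ih
  | iteF _ ih => exact ih

theorem par_diamond {t u v : Tm} (h1 : Par t u) (h2 : Par t v) :
    ∃ w, Par u w ∧ Par v w := ⟨dev t, par_dev h1, par_dev h2⟩

theorem red_par {t u : Tm} (h : Relation.ReflTransGen Par t u) : Red t u := by
  induction h with
  | refl => exact .refl
  | tail _ h ih => exact .trans ih (par_red h)

theorem confluence {t u v : Tm} (h1 : Red t u) (h2 : Red t v) :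
    ∃ w, Red u w ∧ Red v w := by
  have hu : Relation.ReflTransGen Par t u := Relation.ReflTransGen.mono (fun _ _ h => step_par h) _ _ h1
  have hv : Relation.ReflTransGen Par t v := Relation.ReflTransGen.mono (fun _ _ h => step_par h) _ _ h2
  have := Relation.church_rosser
    (fun a b c hab hac => by
      obtain ⟨d, h1, h2⟩ := par_diamond hab hac
      exact ⟨d, .single h1, .single h2⟩) hu hv
  obtain ⟨w, h1, h2⟩ := this
  exact ⟨w, red_par h1, red_par h2⟩

/-- Values: the booleans and λ-abstractions. -/
def Val : Tm → Prop
  | .tt => True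
  | .ff => True
  | .lam _ _ => True
  | _ => False

/-- `NV t`: `t` never reduces to a value. -/
def NV (t : Tm) : Prop := ∀ w, Red t w → ¬ Val w

theorem val_step {v w : Tm} (hv : Val v) (h : Step v w) : Val w := by
  cases v with
  | tt => cases h
  | ff => cases h
  | lam A t => cases h; trivial
  | var n => exact hv.elim
  | app t u => exact hv.elim
  | ite c t u => exact hv.elim

theorem val_red {v w : Tm} (hv : Val v) (h : Red v w) : Val w := by
  induction h with
  | refl => exact hv
  | tail _ h ih => exact val_step ih h

theorem tt_red {w : Tm} (h : Red .tt w) : w = .tt := by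
  induction h with
  | refl => rfl
  | tail _ h ih => subst ih; cases h

theorem ff_red {w : Tm} (h : Red .ff w) : w = .ff := by
  induction h with
  | refl => rfl
  | tail _ h ih => subst ih; cases h

/-- With confluence: `NV` is closed under expansion. -/
theorem nv_expand {t t' : Tm} (h : Red t t') (hnv : NV t') : NV t := by
  intro w hw hv
  obtain ⟨z, hz1, hz2⟩ := confluence h hw
  exact hnv z hz1 (val_red hv hz2)

theorem var_red {n : ℕ} {w : Tm} (h : Red (.var n) w) : w = .var n := by
  induction h with
  | refl => rfl
  | tail _ h ih => subst ih; cases h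

theorem nv_var (n : ℕ) : NV (.var n) := by
  intro w hw hv; rw [var_red hw] at hv; exact hv

/-- Tracking reductions of an application. -/
theorem app_track' {x w : Tm} (h : Red x w) : ∀ {s a}, x = .app s a →
    (∃ s' a', w = .app s' a' ∧ Red s s' ∧ Red a a') ∨ (∃ A b, Red s (.lam A b)) := by
  induction h using Relation.ReflTransGen.head_induction_on with
  | refl => rintro s a rfl; exact .inl ⟨s, a, rfl, .refl, .refl⟩
  | head h hrest ih =>
      rintro s a rfl
      cases h with
      | beta => exact .inr ⟨_, _, .refl⟩
      | congAppL h1 =>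
          rcases ih rfl with ⟨s', a', rfl, hs, ha⟩ | ⟨A, b, hb⟩
          · exact .inl ⟨s', a', rfl, .head h1 hs, ha⟩
          · exact .inr ⟨A, b, .head h1 hb⟩
      | congAppR h1 =>
          rcases ih rfl with ⟨s', a', rfl, hs, ha⟩ | ⟨A, b, hb⟩
          · exact .inl ⟨s', a', rfl, hs, .head h1 ha⟩
          · exact .inr ⟨A, b, hb⟩

theorem app_track {s a w : Tm} (h : Red (.app s a) w) :
    (∃ s' a', w = .app s' a' ∧ Red s s' ∧ Red a a') ∨ (∃ A b, Red s (.lam A b)) :=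
  app_track' h rfl

/-- Tracking reductions of an if-then-else. -/
theorem ite_track' {x w : Tm} (h : Red x w) : ∀ {c u v}, x = .ite c u v →
    (∃ c' u' v', w = .ite c' u' v' ∧ Red c c' ∧ Red u u' ∧ Red v v') ∨
      (Red c .tt ∧ Red u w) ∨ (Red c .ff ∧ Red v w) := by
  induction h using Relation.ReflTransGen.head_induction_on with
  | refl => rintro c u v rfl; exact .inl ⟨c, u, v, rfl, .refl, .refl, .refl⟩
  | head h hrest ih =>
      rintro c u v rfl
      cases h with
      | iteT => exact .inr (.inl ⟨.refl, hrest⟩)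
      | iteF => exact .inr (.inr ⟨.refl, hrest⟩)
      | congIte₀ h1 =>
          rcases ih rfl with ⟨c', u', v', rfl, hc, hu, hv⟩ | ⟨hc, hu⟩ | ⟨hc, hv⟩
          · exact .inl ⟨c', u', v', rfl, .head h1 hc, hu, hv⟩
          · exact .inr (.inl ⟨.head h1 hc, hu⟩)
          · exact .inr (.inr ⟨.head h1 hc, hv⟩)
      | congIte₁ h1 =>
          rcases ih rfl with ⟨c', u', v', rfl, hc, hu, hv⟩ | ⟨hc, hu⟩ | ⟨hc, hv⟩
          · exact .inl ⟨c', u', v', rfl, hc, .head h1 hu, hv⟩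
          · exact .inr (.inl ⟨hc, .head h1 hu⟩)
          · exact .inr (.inr ⟨hc, hv⟩)
      | congIte₂ h1 =>
          rcases ih rfl with ⟨c', u', v', rfl, hc, hu, hv⟩ | ⟨hc, hu⟩ | ⟨hc, hv⟩
          · exact .inl ⟨c', u', v', rfl, hc, hu, .head h1 hv⟩
          · exact .inr (.inl ⟨hc, hu⟩)
          · exact .inr (.inr ⟨hc, .head h1 hv⟩)

theorem ite_track {c u v w : Tm} (h : Red (.ite c u v) w) :
    (∃ c' u' v', w = .ite c' u' v' ∧ Red c c' ∧ Red u u' ∧ Red v v') ∨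
      (Red c .tt ∧ Red u w) ∨ (Red c .ff ∧ Red v w) :=
  ite_track' h rfl

theorem nv_app {s : Tm} (hs : NV s) (a : Tm) : NV (.app s a) := by
  intro w hw hv
  rcases app_track hw with ⟨s', a', rfl, _, _⟩ | ⟨A, b, hb⟩
  · exact hv
  · exact hs _ hb trivial

theorem nv_ite {c : Tm} (hc : NV c) (u v : Tm) : NV (.ite c u v) := by
  intro w hw hv
  rcases ite_track hw with ⟨c', u', v', rfl, _, _, _⟩ | ⟨h1, _⟩ | ⟨h1, _⟩
  · exact hv
  · exact hc _ h1 trivial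
  · exact hc _ h1 trivial

theorem red_tt_ff_false {t : Tm} (h1 : Red t .tt) (h2 : Red t .ff) : False := by
  obtain ⟨w, hw1, hw2⟩ := confluence h1 h2
  rw [tt_red hw1] at hw2
  exact Tm.noConfusion (ff_red hw2).symm

/-- Sieber-style ternary sequentiality logical relation. -/
def R : Ty → Tm → Tm → Tm → Prop
  | .bool, t1, t2, t3 => NV t1 ∨ NV t2 ∨
      (Red t1 .tt ∧ Red t2 .tt ∧ Red t3 .tt) ∨ (Red t1 .ff ∧ Red t2 .ff ∧ Red t3 .ff)
  | .arrow A B, t1, t2, t3 => ∀ a1 a2 a3, R A a1 a2 a3 →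
      R B (.app t1 a1) (.app t2 a2) (.app t3 a3)

theorem R_expand : ∀ (A : Ty) {t1 t2 t3 t1' t2' t3' : Tm}, Red t1 t1' → Red t2 t2' →
    Red t3 t3' → R A t1' t2' t3' → R A t1 t2 t3 := by
  intro A
  induction A with
  | bool =>
      intro t1 t2 t3 t1' t2' t3' h1 h2 h3 hR
      rcases hR with h | h | ⟨ha, hb, hc⟩ | ⟨ha, hb, hc⟩
      · exact .inl (nv_expand h1 h)
      · exact .inr (.inl (nv_expand h2 h))
      · exact .inr (.inr (.inl ⟨h1.trans ha, h2.trans hb, h3.trans hc⟩))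
      · exact .inr (.inr (.inr ⟨h1.trans ha, h2.trans hb, h3.trans hc⟩))
  | arrow A B ihA ihB =>
      intro t1 t2 t3 t1' t2' t3' h1 h2 h3 hR a1 a2 a3 ha
      exact ihB (red_appL h1) (red_appL h2) (red_appL h3) (hR a1 a2 a3 ha)

theorem R_bot1 : ∀ (A : Ty) {t1 : Tm} (t2 t3 : Tm), NV t1 → R A t1 t2 t3 := by
  intro A
  induction A with
  | bool => intro t1 t2 t3 h; exact .inl h
  | arrow A B ihA ihB =>
      intro t1 t2 t3 h a1 a2 a3 ha
      exact ihB _ _ (nv_app h a1)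

theorem R_bot2 : ∀ (A : Ty) (t1 : Tm) {t2 : Tm} (t3 : Tm), NV t2 → R A t1 t2 t3 := by
  intro A
  induction A with
  | bool => intro t1 t2 t3 h; exact .inr (.inl h)
  | arrow A B ihA ihB =>
      intro t1 t2 t3 h a1 a2 a3 ha
      exact ihB _ _ (nv_app h a2)

theorem R_ite {A : Ty} {c1 c2 c3 u1 u2 u3 v1 v2 v3 : Tm}
    (hc : R .bool c1 c2 c3) (hu : R A u1 u2 u3) (hv : R A v1 v2 v3) :
    R A (.ite c1 u1 v1) (.ite c2 u2 v2) (.ite c3 u3 v3) := by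
  rcases hc with h | h | ⟨ha, hb, hcc⟩ | ⟨ha, hb, hcc⟩
  · exact R_bot1 A _ _ (nv_ite h u1 v1)
  · exact R_bot2 A _ _ (nv_ite h u2 v2)
  · exact R_expand A ((red_ite₀ ha).trans (.single .iteT))
      ((red_ite₀ hb).trans (.single .iteT)) ((red_ite₀ hcc).trans (.single .iteT)) hu
  · exact R_expand A ((red_ite₀ ha).trans (.single .iteF))
      ((red_ite₀ hb).trans (.single .iteF)) ((red_ite₀ hcc).trans (.single .iteF)) hv

/-! ### Simultaneous substitution -/

def lift (σ : ℕ → Tm) : ℕ → Tm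
  | 0 => .var 0
  | n + 1 => shift 0 (σ n)

def msub (σ : ℕ → Tm) : Tm → Tm
  | .var n => σ n
  | .lam A t => .lam A (msub (lift σ) t)
  | .app t u => .app (msub σ t) (msub σ u)
  | .tt => .tt
  | .ff => .ff
  | .ite c u v => .ite (msub σ c) (msub σ u) (msub σ v)

def scons (a : Tm) (σ : ℕ → Tm) : ℕ → Tm
  | 0 => a
  | n + 1 => σ n

def liftN : ℕ → (ℕ → Tm) → (ℕ → Tm)
  | 0, σ => σ
  | k + 1, σ => lift (liftN k σ)

def shiftN : ℕ → Tm → Tm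
  | 0, t => t
  | k + 1, t => shift 0 (shiftN k t)

theorem msub_congr {σ σ' : ℕ → Tm} (h : ∀ n, σ n = σ' n) : ∀ t, msub σ t = msub σ' t := by
  intro t
  induction t generalizing σ σ' with
  | var n => exact h n
  | lam A t ih =>
      simp only [msub, Tm.lam.injEq, true_and]
      exact ih (fun n => by cases n <;> simp [lift, h])
  | app t u iht ihu => simp [msub, iht h, ihu h]
  | tt => rfl
  | ff => rfl
  | ite c u v ihc ihu ihv => simp [msub, ihc h, ihu h, ihv h]

theorem msub_id : ∀ t, msub (fun n => .var n) t = t := by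
  intro t
  induction t with
  | var n => rfl
  | lam A t ih =>
      simp only [msub, Tm.lam.injEq, true_and]
      rw [msub_congr (σ' := fun n => .var n) (fun n => by cases n <;> simp [lift, shift]), ih]
  | app t u iht ihu => simp [msub, iht, ihu]
  | tt => rfl
  | ff => rfl
  | ite c u v ihc ihu ihv => simp [msub, ihc, ihu, ihv]

theorem liftN_lt {k n : ℕ} (σ : ℕ → Tm) (h : n < k) : liftN k σ n = .var n := by
  induction k generalizing n with
  | zero => omega
  | succ k ih =>
      cases n with
      | zero => rfl
      | succ n => simp [liftN, lift, ih (by omega : n < k), shift]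

theorem liftN_ge {k n : ℕ} (σ : ℕ → Tm) (h : k ≤ n) :
    liftN k σ n = shiftN k (σ (n - k)) := by
  induction k generalizing n with
  | zero => simp [liftN, shiftN]
  | succ k ih =>
      cases n with
      | zero => omega
      | succ n =>
          have e : n + 1 - (k + 1) = n - k := by omega
          simp only [liftN, lift, ih (by omega : k ≤ n), shiftN, e]

theorem shiftN_var0 (k : ℕ) : shiftN k (.var 0) = .var k := by
  induction k with
  | zero => rfl
  | succ k ih => simp [shiftN, ih, shift]

theorem shiftN_shift (k : ℕ) (s : Tm) : shiftN k (shift 0 s) = shift k (shiftN k s) := by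
  induction k with
  | zero => rfl
  | succ k ih =>
      simp only [shiftN, ih]
      rw [← shift_shift _ _ _ (Nat.zero_le k)]

theorem msub_subst (t : Tm) : ∀ k (σ : ℕ → Tm) (a : Tm),
    subst k (shiftN k a) (msub (liftN k (lift σ)) t) = msub (liftN k (scons a σ)) t := by
  induction t with
  | var n =>
      intro k σ a
      simp only [msub]
      rcases Nat.lt_trichotomy n k with h | h | h
      · rw [liftN_lt _ h, liftN_lt _ h]
        simp [subst, h]
      · subst h
        rw [liftN_ge _ (Nat.le_refl n), liftN_ge _ (Nat.le_refl n)]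
        simp only [Nat.sub_self, lift, shiftN_var0, subst]
        simp [scons]
      · rw [liftN_ge _ (by omega : k ≤ n), liftN_ge _ (by omega : k ≤ n)]
        obtain ⟨m, hm⟩ : ∃ m, n - k = m + 1 := ⟨n - k - 1, by omega⟩
        rw [hm]
        simp only [lift, scons]
        rw [shiftN_shift, subst_shift_cancel]
  | lam A t ih =>
      intro k σ a
      simp only [msub, subst, Tm.lam.injEq, true_and]
      exact ih (k + 1) σ a
  | app t u iht ihu => intro k σ a; simp [msub, subst, iht, ihu]
  | tt => intros; rfl
  | ff => intros; rfl
  | ite c u v ihc ihu ihv => intro k σ a; simp [msub, subst, ihc, ihu, ihv]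

theorem msub_scons (t : Tm) (σ : ℕ → Tm) (a : Tm) :
    subst 0 a (msub (lift σ) t) = msub (scons a σ) t :=
  msub_subst t 0 σ a

/-- Fundamental lemma of the logical relation. -/
theorem fund {Γ : List Ty} {t : Tm} {A : Ty} (h : HasTy Γ t A) :
    ∀ σ1 σ2 σ3 : ℕ → Tm, (∀ n B, Γ[n]? = some B → R B (σ1 n) (σ2 n) (σ3 n)) →
      R A (msub σ1 t) (msub σ2 t) (msub σ3 t) := by
  induction h with
  | var hn => intro σ1 σ2 σ3 hσ; exact hσ _ _ hn
  | @lam Γ A B b hb ih =>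
      intro σ1 σ2 σ3 hσ
      intro a1 a2 a3 ha
      have key := ih (scons a1 σ1) (scons a2 σ2) (scons a3 σ3) (by
        intro n B hn
        cases n with
        | zero =>
            simp only [List.getElem?_cons_zero, Option.some.injEq] at hn
            subst hn
            exact ha
        | succ n =>
            simp only [List.getElem?_cons_succ] at hn
            exact hσ n B hn)
      rw [← msub_scons, ← msub_scons, ← msub_scons] at key
      exact R_expand B (.single .beta) (.single .beta) (.single .beta) key
  | app ht hu iht ihu =>
      intro σ1 σ2 σ3 hσ
      exact iht σ1 σ2 σ3 hσ _ _ _ (ihu σ1 σ2 σ3 hσ)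
  | tt => intro σ1 σ2 σ3 hσ; exact .inr (.inr (.inl ⟨.refl, .refl, .refl⟩))
  | ff => intro σ1 σ2 σ3 hσ; exact .inr (.inr (.inr ⟨.refl, .refl, .refl⟩))
  | ite hc ht hu ihc iht ihu =>
      intro σ1 σ2 σ3 hσ
      exact R_ite (ihc σ1 σ2 σ3 hσ) (iht σ1 σ2 σ3 hσ) (ihu σ1 σ2 σ3 hσ)


/-- Scott's parallel OR is not definable in the simply typed λ-calculus with
booleans: there is no simply typed term `O : Bool → Bool → Bool` such that
`O F F` reduces to `F`, while `O u T` and `O T u` reduce to `T` for every term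
`u` (including free variables). -/
theorem no_parallel_or :
    ¬ ∃ O : Tm, HasTy [] O (Ty.arrow .bool (Ty.arrow .bool .bool)) ∧
      Relation.ReflTransGen Step (.app (.app O .ff) .ff) .ff ∧
      (∀ u : Tm, Relation.ReflTransGen Step (.app (.app O u) .tt) .tt) ∧
      (∀ u : Tm, Relation.ReflTransGen Step (.app (.app O .tt) u) .tt) := by
  rintro ⟨O, hty, hFF, hT1, hT2⟩
  have hO := fund hty (fun n => .var n) (fun n => .var n) (fun n => .var n)
    (by intro n B hn; simp at hn)
  rw [msub_id] at hO
  have h1 : R .bool (.var 0) .tt .ff := .inl (nv_var 0)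
  have h2 : R .bool .tt (.var 0) .ff := .inr (.inl (nv_var 0))
  have hfin := hO _ _ _ h1 _ _ _ h2
  rcases hfin with h | h | ⟨ha, hb, hc⟩ | ⟨ha, hb, hc⟩
  · exact h .tt (hT1 (.var 0)) trivial
  · exact h .tt (hT2 (.var 0)) trivial
  · exact red_tt_ff_false hc hFF
  · exact red_tt_ff_false (hT1 (.var 0)) ha
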